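/- arXiv:1409.0072 — 2 statements merged into one kernel-verified Lean document; each statement's English description precedes it below -/
import Mathlib

section
/- With W(s) = A11 + A12 (sI − A22)⁻¹ A21 and R(s) = diag(W(s)) (the diagonal matrix of the diagonal entries of W), define Q(s) = (sI − R(s))⁻¹ (W(s) − R(s)). Then lim_{s→∞} s·Q(s) = A11 − diag(A11), where the limit is taken entrywise along real s → ∞. -/
open Matrix Filter Topology

/-- Entrywise convergence of the resolvent to zero along real `s → ∞`. -/
theorem resolvent_entry_tendsto_zero (q : ℕ) (A22 : Matrix (Fin q) (Fin q) ℝ) (a b : Fin q) :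
    Tendsto (fun s : ℝ => ((s • (1 : Matrix (Fin q) (Fin q) ℝ) - A22)⁻¹) a b) atTop (nhds 0) := by
  set B : ℝ → Matrix (Fin q) (Fin q) ℝ := fun t => 1 - t • A22 with hBdef
  have hBcont : Continuous B := continuous_const.sub (continuous_id.smul continuous_const)
  have hB0 : B 0 = 1 := by simp [hBdef]
  -- det (B t) → 1 as t → 0
  have hdet : Tendsto (fun t : ℝ => (B t).det) (nhds 0) (nhds 1) := by
    have := (hBcont.matrix_det).tendsto (0 : ℝ)
    simpa [hB0] using this
  have hinv : Tendsto (fun s : ℝ => (s : ℝ)⁻¹) atTop (nhds 0) := tendsto_inv_atTop_zero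
  have hdet' : Tendsto (fun s : ℝ => (B s⁻¹).det) atTop (nhds 1) := hdet.comp hinv
  -- eventually det (B s⁻¹) is a unit and s ≠ 0
  have hev : ∀ᶠ s : ℝ in atTop, (B s⁻¹).det ≠ 0 ∧ s ≠ 0 := by
    have h1 : ∀ᶠ s : ℝ in atTop, (0 : ℝ) < (B s⁻¹).det :=
      hdet' (eventually_gt_nhds one_pos)
    have h2 : ∀ᶠ s : ℝ in atTop, (0 : ℝ) < s := eventually_gt_atTop 0
    filter_upwards [h1, h2] with s hs1 hs2 using ⟨ne_of_gt hs1, ne_of_gt hs2⟩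
  -- eventual identity (s•1 - A22)⁻¹ = s⁻¹ • (B s⁻¹)⁻¹
  have hkey : ∀ᶠ s : ℝ in atTop,
      ((s • (1 : Matrix (Fin q) (Fin q) ℝ) - A22)⁻¹) a b = s⁻¹ * ((B s⁻¹)⁻¹ a b) := by
    filter_upwards [hev] with s hs
    obtain ⟨hdet0, hs0⟩ := hs
    have hBs : s • B s⁻¹ = s • (1 : Matrix (Fin q) (Fin q) ℝ) - A22 := by
      simp [hBdef, smul_sub, smul_smul, mul_inv_cancel₀ hs0]
    have hunit : IsUnit (B s⁻¹).det := isUnit_iff_ne_zero.mpr hdet0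
    have hleft : (s⁻¹ • (B s⁻¹)⁻¹) * (s • (1 : Matrix (Fin q) (Fin q) ℝ) - A22) = 1 := by
      rw [← hBs, Matrix.smul_mul, Matrix.mul_smul, smul_smul, inv_mul_cancel₀ hs0,
        Matrix.nonsing_inv_mul _ hunit, one_smul]
    rw [Matrix.inv_eq_left_inv hleft]
    simp [Matrix.smul_apply]
  -- the limit
  have hadj : Tendsto (fun s : ℝ => (adjugate (B s⁻¹)) a b) atTop
      (nhds ((adjugate (B 0)) a b)) := by
    have hc : Continuous fun t : ℝ => (adjugate (B t)) a b :=
      ((hBcont.matrix_adjugate).matrix_elem a b)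
    exact (hc.tendsto 0).comp hinv
  have hRinv : Tendsto (fun s : ℝ => Ring.inverse ((B s⁻¹).det)) atTop (nhds 1) := by
    have := hdet'.inv₀ one_ne_zero
    simpa [Ring.inverse_eq_inv'] using this
  have hmain : Tendsto (fun s : ℝ => s⁻¹ * ((B s⁻¹)⁻¹ a b)) atTop (nhds 0) := by
    have : Tendsto (fun s : ℝ =>
        s⁻¹ * (Ring.inverse ((B s⁻¹).det) * (adjugate (B s⁻¹)) a b)) atTop
        (nhds (0 * (1 * (adjugate (B 0)) a b))) := hinv.mul (hRinv.mul hadj)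
    simpa [Matrix.inv_def, Matrix.smul_apply] using this
  exact hmain.congr' (by filter_upwards [hkey] with s h using h.symm)

/-- Entrywise convergence of `W` to `A11`. -/
theorem W_entry_tendsto (p q : ℕ)
    (A11 : Matrix (Fin p) (Fin p) ℝ) (A12 : Matrix (Fin p) (Fin q) ℝ)
    (A21 : Matrix (Fin q) (Fin p) ℝ) (A22 : Matrix (Fin q) (Fin q) ℝ)
    (W : ℝ → Matrix (Fin p) (Fin p) ℝ)
    (hW : ∀ s : ℝ, W s = A11 + A12 * (s • (1 : Matrix (Fin q) (Fin q) ℝ) - A22)⁻¹ * A21)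
    (i j : Fin p) :
    Tendsto (fun s : ℝ => W s i j) atTop (nhds (A11 i j)) := by
  have hsum : Tendsto (fun s : ℝ =>
      (A12 * (s • (1 : Matrix (Fin q) (Fin q) ℝ) - A22)⁻¹ * A21) i j) atTop (nhds 0) := by
    have : Tendsto (fun s : ℝ =>
        ∑ b : Fin q, (∑ a : Fin q,
          A12 i a * ((s • (1 : Matrix (Fin q) (Fin q) ℝ) - A22)⁻¹) a b) * A21 b j) atTop
        (nhds (∑ b : Fin q, (∑ a : Fin q, A12 i a * (0 : ℝ)) * A21 b j)) := by
      refine tendsto_finset_sum _ fun b _ => Tendsto.mul ?_ tendsto_const_nhds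
      exact tendsto_finset_sum _ fun a _ =>
        tendsto_const_nhds.mul (resolvent_entry_tendsto_zero q A22 a b)
    simpa [Matrix.mul_apply, Finset.sum_mul] using this
  have := tendsto_const_nhds.add hsum (x := atTop) (f := fun _ : ℝ => A11 i j)
  simp only [add_zero] at this
  exact this.congr fun s => by simp [hW s, Matrix.add_apply]

/-- with W(s) = A11 + A12(sI − A22)⁻¹A21, R(s) = diag W(s) and
Q(s) = (sI − R(s))⁻¹ (W(s) − R(s)), one has lim_{s→∞} s·Q(s) = A11 − diag A11 entrywise. -/
theorem stmt1 (p q : ℕ)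
    (A11 : Matrix (Fin p) (Fin p) ℝ) (A12 : Matrix (Fin p) (Fin q) ℝ)
    (A21 : Matrix (Fin q) (Fin p) ℝ) (A22 : Matrix (Fin q) (Fin q) ℝ)
    (W R Q : ℝ → Matrix (Fin p) (Fin p) ℝ)
    (hW : ∀ s : ℝ, W s = A11 + A12 * (s • (1 : Matrix (Fin q) (Fin q) ℝ) - A22)⁻¹ * A21)
    (hR : ∀ s : ℝ, R s = Matrix.diagonal (fun i => W s i i))
    (hQ : ∀ s : ℝ, Q s = (s • (1 : Matrix (Fin p) (Fin p) ℝ) - R s)⁻¹ * (W s - R s)) :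
    ∀ i j : Fin p,
      Tendsto (fun s : ℝ => s * Q s i j) atTop
        (nhds ((A11 - Matrix.diagonal (fun i => A11 i i)) i j)) := by
  intro i j
  have hWt : ∀ a b : Fin p, Tendsto (fun s : ℝ => W s a b) atTop (nhds (A11 a b)) :=
    fun a b => W_entry_tendsto p q A11 A12 A21 A22 W hW a b
  -- Q s i j = Ring.inverse (diag vector) i * (W s - R s) i j
  have hQe : ∀ s : ℝ,
      Q s i j = Ring.inverse (fun k => s - W s k k) i * ((W s - R s) i j) := by
    intro s
    have h1 : s • (1 : Matrix (Fin p) (Fin p) ℝ) - R s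
        = Matrix.diagonal (fun k => s - W s k k) := by
      rw [hR s, Matrix.smul_one_eq_diagonal, ← Matrix.diagonal_sub]
    rw [hQ s, h1, Matrix.inv_diagonal, Matrix.diagonal_mul]
  have hRiv : ∀ s : ℝ, (∀ k : Fin p, s - W s k k ≠ 0) →
      Ring.inverse (fun k => s - W s k k) i = (s - W s i i)⁻¹ := by
    intro s hs
    have hu : IsUnit (fun k => s - W s k k : Fin p → ℝ) := by
      refine ⟨⟨fun k => s - W s k k, fun k => (s - W s k k)⁻¹, ?_, ?_⟩, rfl⟩
      · funext k; exact mul_inv_cancel₀ (hs k)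
      · funext k; exact inv_mul_cancel₀ (hs k)
    have h2 : Ring.inverse (fun k => s - W s k k) i * (s - W s i i) = 1 :=
      congrFun (Ring.inverse_mul_cancel _ hu) i
    exact eq_inv_of_mul_eq_one_left h2
  have hdk : ∀ k : Fin p, Tendsto (fun s : ℝ => s - W s k k) atTop atTop := by
    intro k
    have hb : ∀ᶠ s : ℝ in atTop, W s k k < A11 k k + 1 :=
      (hWt k k) (eventually_lt_nhds (lt_add_one _))
    refine tendsto_atTop_mono' atTop ?_
      (tendsto_atTop_add_const_right atTop (-(A11 k k + 1)) tendsto_id)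
    filter_upwards [hb] with s hs
    simp only [id_eq]
    linarith
  have hall : ∀ᶠ s : ℝ in atTop, ∀ k : Fin p, s - W s k k ≠ 0 :=
    eventually_all.mpr fun k => (hdk k).eventually_ne_atTop 0
  by_cases hij : i = j
  · subst hij
    have hzero : ∀ s : ℝ, s * Q s i i = 0 := by
      intro s
      rw [hQe s]
      simp [Matrix.sub_apply, hR s, Matrix.diagonal_apply_eq]
    have htarget : (A11 - Matrix.diagonal (fun k => A11 k k)) i i = 0 := by
      simp [Matrix.sub_apply, Matrix.diagonal_apply_eq]
    rw [htarget]
    exact tendsto_const_nhds.congr fun s => (hzero s).symm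
  · -- off-diagonal case
    have htarget : (A11 - Matrix.diagonal (fun k => A11 k k)) i j = A11 i j := by
      simp [Matrix.sub_apply, Matrix.diagonal_apply_ne _ hij]
    rw [htarget]
    have hd : Tendsto (fun s : ℝ => s - W s i i) atTop atTop := hdk i
    have hdpos : ∀ᶠ s : ℝ in atTop, (0 : ℝ) < s - W s i i := hd.eventually_gt_atTop 0
    -- s * Ring.inverse (s - W s i i) → 1
    have hfrac : Tendsto (fun s : ℝ => s * (s - W s i i)⁻¹) atTop (nhds 1) := by
      have h0 : Tendsto (fun s : ℝ => W s i i * (s - W s i i)⁻¹) atTop (nhds 0) := by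
        have := (hWt i i).mul hd.inv_tendsto_atTop
        simpa using this
      have h1 : Tendsto (fun s : ℝ => 1 + W s i i * (s - W s i i)⁻¹) atTop (nhds 1) := by
        have := tendsto_const_nhds.add h0 (x := atTop) (f := fun _ : ℝ => (1 : ℝ))
        simpa using this
      refine h1.congr' ?_
      filter_upwards [hdpos] with s hs
      have hne : s - W s i i ≠ 0 := ne_of_gt hs
      field_simp
      ring
    -- (W s - R s) i j = W s i j → A11 i j
    have hWR : Tendsto (fun s : ℝ => (W s - R s) i j) atTop (nhds (A11 i j)) := by
      refine (hWt i j).congr fun s => ?_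
      simp [Matrix.sub_apply, hR s, Matrix.diagonal_apply_ne _ hij]
    have hmul : Tendsto (fun s : ℝ => (s * (s - W s i i)⁻¹) * ((W s - R s) i j)) atTop
        (nhds (1 * A11 i j)) := hfrac.mul hWR
    rw [one_mul] at hmul
    refine hmul.congr' ?_
    filter_upwards [hall] with s hs
    rw [hQe s, hRiv s hs]
    ring
end

section
/- Let Q, P, R be as in the DSF construction from a state-space system (A, B, C=[I_p 0]): W(s) = A11 + A12(sI−A22)⁻¹A21, V(s) = B1 + A12(sI−A22)⁻¹B2, R(s) = diag W(s), Q = (sI−R)⁻¹(W−R), P = (sI−R)⁻¹V. Then (I − Q(s))⁻¹P(s) = C(sI − A)⁻¹B = G(s), i.e., the transfer function is recovered from the dynamical structure functions, as an identity of rational matrix functions (valid for all s where the inverses exist). -/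
open Matrix

/-- the transfer function is recovered from the dynamical structure functions:
(I − Q(s))⁻¹ P(s) = C(sI − A)⁻¹B, for every s where the relevant inverses exist. -/
theorem stmt15 (p q m : ℕ)
    (A11 : Matrix (Fin p) (Fin p) ℝ) (A12 : Matrix (Fin p) (Fin q) ℝ)
    (A21 : Matrix (Fin q) (Fin p) ℝ) (A22 : Matrix (Fin q) (Fin q) ℝ)
    (B1 : Matrix (Fin p) (Fin m) ℝ) (B2 : Matrix (Fin q) (Fin m) ℝ)
    (W R Q : ℝ → Matrix (Fin p) (Fin p) ℝ) (V P : ℝ → Matrix (Fin p) (Fin m) ℝ)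
    (hW : ∀ s : ℝ, W s = A11 + A12 * (s • (1 : Matrix (Fin q) (Fin q) ℝ) - A22)⁻¹ * A21)
    (hV : ∀ s : ℝ, V s = B1 + A12 * (s • (1 : Matrix (Fin q) (Fin q) ℝ) - A22)⁻¹ * B2)
    (hR : ∀ s : ℝ, R s = Matrix.diagonal (fun i => W s i i))
    (hQ : ∀ s : ℝ, Q s = (s • (1 : Matrix (Fin p) (Fin p) ℝ) - R s)⁻¹ * (W s - R s))
    (hP : ∀ s : ℝ, P s = (s • (1 : Matrix (Fin p) (Fin p) ℝ) - R s)⁻¹ * V s) :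
    ∀ s : ℝ,
      IsUnit (s • (1 : Matrix (Fin q) (Fin q) ℝ) - A22) →
      IsUnit (s • (1 : Matrix (Fin p) (Fin p) ℝ) - R s) →
      IsUnit ((1 : Matrix (Fin p) (Fin p) ℝ) - Q s) →
      IsUnit (s • (1 : Matrix (Fin p ⊕ Fin q) (Fin p ⊕ Fin q) ℝ) -
        Matrix.fromBlocks A11 A12 A21 A22) →
      ((1 : Matrix (Fin p) (Fin p) ℝ) - Q s)⁻¹ * P s =
        Matrix.fromCols (1 : Matrix (Fin p) (Fin p) ℝ) (0 : Matrix (Fin p) (Fin q) ℝ) *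
          (s • (1 : Matrix (Fin p ⊕ Fin q) (Fin p ⊕ Fin q) ℝ) -
            Matrix.fromBlocks A11 A12 A21 A22)⁻¹ *
          Matrix.fromRows B1 B2 := by
  intro s hD hRs hIQ hM
  haveI iD : Invertible (s • (1 : Matrix (Fin q) (Fin q) ℝ) - A22) := hD.invertible
  haveI iRs : Invertible (s • (1 : Matrix (Fin p) (Fin p) ℝ) - R s) := hRs.invertible
  haveI iIQ : Invertible ((1 : Matrix (Fin p) (Fin p) ℝ) - Q s) := hIQ.invertible
  -- key: (sI - R) * (I - Q) = sI - W
  have key : (s • (1 : Matrix (Fin p) (Fin p) ℝ) - R s) * (1 - Q s)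
      = s • (1 : Matrix (Fin p) (Fin p) ℝ) - W s := by
    rw [hQ s, Matrix.mul_sub, Matrix.mul_one, ← Matrix.mul_assoc,
      Matrix.mul_nonsing_inv _ ((Matrix.isUnit_iff_isUnit_det _).mp hRs), Matrix.one_mul,
      sub_sub_sub_cancel_right]
  have hSu : IsUnit (s • (1 : Matrix (Fin p) (Fin p) ℝ) - W s) := key ▸ (hRs.mul hIQ)
  haveI iS : Invertible (s • (1 : Matrix (Fin p) (Fin p) ℝ) - W s) := hSu.invertible
  -- LHS
  have lhs_eq : ((1 : Matrix (Fin p) (Fin p) ℝ) - Q s)⁻¹ * P s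
      = (s • (1 : Matrix (Fin p) (Fin p) ℝ) - W s)⁻¹ * V s := by
    rw [hP s, ← Matrix.mul_assoc, ← Matrix.mul_inv_rev, key]
  -- block decomposition of sI - A
  have hblock : s • (1 : Matrix (Fin p ⊕ Fin q) (Fin p ⊕ Fin q) ℝ) -
      Matrix.fromBlocks A11 A12 A21 A22 =
      Matrix.fromBlocks (s • 1 - A11) (-A12) (-A21) (s • 1 - A22) := by
    rw [← Matrix.fromBlocks_one, Matrix.fromBlocks_smul]
    simp [sub_eq_add_neg, Matrix.fromBlocks_neg, Matrix.fromBlocks_add]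
  -- Schur complement equals sI - W
  have hS' : (s • (1 : Matrix (Fin p) (Fin p) ℝ) - A11)
        - (-A12) * ⅟(s • (1 : Matrix (Fin q) (Fin q) ℝ) - A22) * (-A21)
      = s • (1 : Matrix (Fin p) (Fin p) ℝ) - W s := by
    rw [Matrix.invOf_eq_nonsing_inv, hW s, Matrix.neg_mul, Matrix.neg_mul, Matrix.mul_neg,
      neg_neg, sub_sub]
  haveI iS' : Invertible ((s • (1 : Matrix (Fin p) (Fin p) ℝ) - A11)
      - (-A12) * ⅟(s • (1 : Matrix (Fin q) (Fin q) ℝ) - A22) * (-A21)) := by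
    rw [hS']; exact iS
  haveI iM : Invertible (Matrix.fromBlocks (s • (1 : Matrix (Fin p) (Fin p) ℝ) - A11) (-A12)
      (-A21) (s • (1 : Matrix (Fin q) (Fin q) ℝ) - A22)) := by
    rw [← hblock]; exact hM.invertible
  rw [lhs_eq, hblock]
  simp only [← Matrix.invOf_eq_nonsing_inv]
  have hinv : ⅟((s • (1 : Matrix (Fin p) (Fin p) ℝ) - A11)
        - (-A12) * ⅟(s • (1 : Matrix (Fin q) (Fin q) ℝ) - A22) * (-A21))
      = ⅟(s • (1 : Matrix (Fin p) (Fin p) ℝ) - W s) := by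
    simp only [Matrix.invOf_eq_nonsing_inv, Matrix.neg_mul, Matrix.mul_neg, neg_neg,
      sub_sub, ← hW s]
  rw [Matrix.invOf_fromBlocks₂₂_eq, Matrix.fromCols_mul_fromBlocks,
    Matrix.fromCols_mul_fromRows, hinv]
  simp only [Matrix.one_mul, Matrix.zero_mul, add_zero, Matrix.mul_neg, Matrix.neg_mul,
    neg_neg, hV s, ← Matrix.invOf_eq_nonsing_inv, Matrix.mul_add, Matrix.mul_assoc]
end
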